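/- Let k be an integer with k ∉ {0,1}, and let S be an open neighborhood of I_n in D_n(ℂ) consisting of invertible matrices. Two maps φ, ψ : D_n(ℂ) → D_n(ℂ) with ψ complex linear satisfy tr(φ(A)ψ(B)^k) = tr(AB^k) for all A ∈ D_n(ℂ) and all B ∈ S if and only if there exist an invertible diagonal matrix C ∈ D_n(ℂ) and a permutation matrix P ∈ M_n(ℂ) such that φ(A) = PC^{-k}AP⁻¹ and ψ(B) = PCBP⁻¹ for all A, B ∈ D_n(ℂ). -/

import Mathlib

open Matrix Polynomial


lemma diag_zpow_nat {n : ℕ} (v : Fin n → ℂ) (m : ℕ) :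
    (diagonal v) ^ (m : ℤ) = diagonal (fun i => v i ^ (m : ℤ)) := by
  simp [zpow_natCast, diagonal_pow]

lemma diag_zpow {n : ℕ} (v : Fin n → ℂ) (hv : ∀ i, v i ≠ 0) (z : ℤ) :
    (diagonal v) ^ z = diagonal (fun i => v i ^ z) := by
  obtain ⟨m, rfl | rfl⟩ := z.eq_nat_or_neg
  · exact diag_zpow_nat v m
  · have hdet : IsUnit (diagonal v).det := by
      rw [det_diagonal]
      exact isUnit_iff_ne_zero.mpr (Finset.prod_ne_zero_iff.mpr fun i _ => hv i)
    rw [Matrix.zpow_neg hdet, diag_zpow_nat]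
    have hinv : (diagonal (fun i => v i ^ (m:ℤ)))⁻¹ = diagonal (fun i => (v i ^ (m:ℤ))⁻¹) := by
      apply Matrix.inv_eq_right_inv
      rw [diagonal_mul_diagonal]
      convert diagonal_one using 2
      funext i
      exact mul_inv_cancel₀ (zpow_ne_zero _ (hv i))
    rw [hinv]
    have : (fun i => (v i ^ (m:ℤ))⁻¹) = fun i => v i ^ (-(m:ℤ)) :=
      funext fun i => (_root_.zpow_neg (v i) (m:ℤ)).symm
    rw [this]

lemma ball_infinite {ε : ℝ} (hε : 0 < ε) : (Metric.ball (1:ℂ) ε).Infinite := by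
  have h1 : Set.InjOn (fun d : ℝ => (1 : ℂ) + d) (Set.Ioo 0 ε) := by
    intro a _ b _ hab
    simpa [Complex.ofReal_inj] using hab
  have h2 : ((fun d : ℝ => (1:ℂ) + d) '' (Set.Ioo 0 ε)).Infinite :=
    (Set.infinite_coe_iff.mp (Set.Ioo.infinite hε)).image h1
  refine h2.mono ?_
  rintro z ⟨d, ⟨hd0, hdε⟩, rfl⟩
  simp only [Metric.mem_ball]
  rw [dist_eq_norm]
  simp only [add_sub_cancel_left]
  rw [Complex.norm_real, Real.norm_eq_abs, abs_of_pos hd0]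
  exact hdε

lemma poly_vanish {ε : ℝ} (hε : 0 < ε) (p : ℂ[X])
    (h : ∀ s ∈ Metric.ball (1:ℂ) ε, p.eval s = 0) : p = 0 :=
  p.eq_zero_of_infinite_isRoot ((ball_infinite hε).mono h)

lemma mem_ball_one_add {ε : ℝ} (hε : 0 < ε) :
    ((1 + ε/2 : ℝ) : ℂ) ∈ Metric.ball (1:ℂ) ε := by
  simp only [Metric.mem_ball]
  rw [dist_eq_norm]
  have : ((1 + ε/2 : ℝ) : ℂ) - 1 = ((ε/2 : ℝ) : ℂ) := by push_cast; ring
  rw [this, Complex.norm_real, Real.norm_eq_abs, abs_of_pos (by linarith)]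
  linarith

lemma one_add_half_ne {ε : ℝ} (hε : 0 < ε) {k : ℤ} (hk0 : k ≠ 0) :
    ((1 + ε/2 : ℝ) : ℂ) ^ k ≠ 1 := by
  have ha : (1:ℝ) < 1 + ε/2 := by linarith
  have key : (1 + ε/2 : ℝ) ^ k ≠ 1 := by
    rcases hk0.lt_or_gt with hk | hk
    · have h1 : (1:ℝ) < (1 + ε/2) ^ (-k) := one_lt_zpow₀ ha (by omega)
      have h2 : (1 + ε/2 : ℝ) ^ k = ((1 + ε/2) ^ (-k))⁻¹ := by
        rw [← _root_.zpow_neg, neg_neg]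
      rw [h2]
      intro hc
      rw [inv_eq_one] at hc
      exact absurd hc h1.ne'
    · exact (one_lt_zpow₀ ha hk).ne'
  intro hc
  apply key
  have : (((1 + ε/2 : ℝ) ^ k : ℝ) : ℂ) = ((1:ℝ) : ℂ) := by
    rw [Complex.ofReal_zpow]; exact_mod_cast hc
  exact_mod_cast this

lemma indep_zpow {n : ℕ} {k : ℤ} (hk0 : k ≠ 0) {ε : ℝ} (hε : 0 < ε)
    (x : Fin n → ℂ)
    (h : ∀ b : Fin n → ℂ, (∀ i, b i ∈ Metric.ball (1:ℂ) ε) → ∑ j, x j * b j ^ k = 0) :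
    x = 0 := by
  funext j0
  have hone : (1:ℂ) ∈ Metric.ball (1:ℂ) ε := by simp [hε]
  set t0 : ℂ := ((1 + ε/2 : ℝ) : ℂ) with ht0
  have ht0mem : t0 ∈ Metric.ball (1:ℂ) ε := mem_ball_one_add hε
  have h1 := h (fun _ => 1) (fun _ => hone)
  have h2 := h (Function.update (fun _ => (1:ℂ)) j0 t0)
    (fun i => by
      rcases eq_or_ne i j0 with rfl | hi
      · simpa using ht0mem
      · simpa [Function.update_of_ne hi] using hone)
  have hsub : x j0 * t0 ^ k - x j0 * (1:ℂ) ^ k = 0 := by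
    calc x j0 * t0 ^ k - x j0 * (1:ℂ) ^ k
        = ∑ j, (x j * (Function.update (fun _ => (1:ℂ)) j0 t0 j) ^ k - x j * ((1:ℂ)) ^ k) := by
          rw [Finset.sum_eq_single j0]
          · simp
          · intro b _ hb
            simp [Function.update_of_ne hb]
          · simp
      _ = ∑ j, x j * (Function.update (fun _ => (1:ℂ)) j0 t0 j) ^ k
            - ∑ j, x j * ((1:ℂ)) ^ k := Finset.sum_sub_distrib _ _
      _ = 0 := by rw [h2]; rw [show ∑ j, x j * ((1:ℂ)) ^ k = 0 from h1]; ring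
  have ht0k : t0 ^ k ≠ 1 := one_add_half_ne hε hk0
  have hfac : x j0 * (t0 ^ k - 1) = 0 := by
    rw [_root_.one_zpow] at hsub
    linear_combination hsub
  rcases mul_eq_zero.mp hfac with hz | hz
  · simpa using hz
  · exact absurd (sub_eq_zero.mp hz) ht0k

lemma permMatrix_apply {n : ℕ} (σ : Equiv.Perm (Fin n)) (i j : Fin n) :
    σ.permMatrix ℂ i j = if σ i = j then 1 else 0 := by
  simp [Equiv.Perm.permMatrix, PEquiv.toMatrix, Equiv.toPEquiv]

lemma permMatrix_det_isUnit {n : ℕ} (σ : Equiv.Perm (Fin n)) :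
    IsUnit (σ.permMatrix ℂ).det := by
  rw [Matrix.det_permutation]
  rcases Int.units_eq_one_or (Equiv.Perm.sign σ) with h | h <;> rw [h] <;> simp

lemma perm_mul_diag {n : ℕ} (σ : Equiv.Perm (Fin n)) (v : Fin n → ℂ) :
    σ.permMatrix ℂ * diagonal v = diagonal (fun i => v (σ i)) * σ.permMatrix ℂ := by
  ext i j
  rw [mul_apply, mul_apply]
  simp only [permMatrix_apply, diagonal_apply, ite_mul, mul_ite, one_mul, zero_mul,
    mul_one, mul_zero]
  simp only [Equiv.apply_eq_iff_eq_symm_apply σ]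
  rw [Finset.sum_ite_eq' Finset.univ j, Finset.sum_ite_eq' Finset.univ (σ.symm j)]
  simp only [Finset.mem_univ, if_true]
  by_cases h : i = σ.symm j
  · subst h
    simp
  · rw [if_neg h, if_neg (fun hc => h (by simp [← hc]))]

lemma perm_conj {n : ℕ} (σ : Equiv.Perm (Fin n)) (v : Fin n → ℂ) :
    σ.permMatrix ℂ * diagonal v * (σ.permMatrix ℂ)⁻¹ = diagonal (fun i => v (σ i)) := by
  rw [perm_mul_diag, mul_assoc, mul_nonsing_inv _ (permMatrix_det_isUnit σ), mul_one]
lemma sum_split {n : ℕ} {j l : Fin n} (hjl : j ≠ l) (g : Fin n → ℂ) :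
    ∑ p, g p = g j + g l + ∑ p ∈ (Finset.univ.erase j).erase l, g p := by
  have h1 : ∑ p, g p = g j + ∑ p ∈ Finset.univ.erase j, g p :=
    (Finset.add_sum_erase _ g (Finset.mem_univ j)).symm
  have h2 : ∑ p ∈ Finset.univ.erase j, g p
      = g l + ∑ p ∈ (Finset.univ.erase j).erase l, g p :=
    (Finset.add_sum_erase _ g (Finset.mem_erase.mpr ⟨Ne.symm hjl, Finset.mem_univ l⟩)).symm
  rw [h1, h2, ← add_assoc]
/-- Trace of `k`-power-product preservers on diagonal matrices: the trace
condition (with `ψ` complex linear) holds iff `φ(A) = P C^{-k} A P⁻¹` and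
`ψ(B) = P C B P⁻¹` for an invertible diagonal `C` and a permutation matrix `P`. -/
theorem stmt_17 (n : ℕ) (k : ℤ) (hk0 : k ≠ 0) (hk1 : k ≠ 1)
    (S : Set (Matrix (Fin n) (Fin n) ℂ))
    (hSopen : ∃ U : Set (Matrix (Fin n) (Fin n) ℂ), IsOpen U ∧
      S = U ∩ {A : Matrix (Fin n) (Fin n) ℂ | A.IsDiag})
    (hS1 : 1 ∈ S) (hSinv : ∀ A ∈ S, IsUnit A)
    (φ ψ : Matrix (Fin n) (Fin n) ℂ → Matrix (Fin n) (Fin n) ℂ)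
    (hφdiag : ∀ A : Matrix (Fin n) (Fin n) ℂ, A.IsDiag → (φ A).IsDiag)
    (hψdiag : ∀ A : Matrix (Fin n) (Fin n) ℂ, A.IsDiag → (ψ A).IsDiag)
    (hψlin : IsLinearMap ℂ ψ) :
    (∀ A : Matrix (Fin n) (Fin n) ℂ, A.IsDiag →
      ∀ B ∈ S, (φ A * ψ B ^ k).trace = (A * B ^ k).trace) ↔
    ∃ (C P : Matrix (Fin n) (Fin n) ℂ) (σ : Equiv.Perm (Fin n)),
      C.IsDiag ∧ IsUnit C ∧ P = σ.permMatrix ℂ ∧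
      (∀ A : Matrix (Fin n) (Fin n) ℂ, A.IsDiag → φ A = P * C ^ (-k) * A * P⁻¹) ∧
      (∀ B : Matrix (Fin n) (Fin n) ℂ, B.IsDiag → ψ B = P * C * B * P⁻¹) := by
  obtain ⟨U, hUopen, hSU⟩ := hSopen
  constructor
  · intro h
    rcases Nat.eq_zero_or_pos n with hn0 | hn
    · subst hn0
      exact ⟨1, 1, 1, isDiag_one, isUnit_one,
        by ext i j; exact i.elim0,
        fun A _ => by ext i j; exact i.elim0,
        fun B _ => by ext i j; exact i.elim0⟩
    -- main case n > 0
    have hφd : ∀ a : Fin n → ℂ, φ (diagonal a) = diagonal (fun i => φ (diagonal a) i i) :=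
      fun a => (IsDiag.diagonal_diag (hφdiag _ (isDiag_diagonal a))).symm
    -- ψ structure
    set mm : Fin n → Fin n → ℂ := fun i j => ψ (diagonal (Pi.single j 1)) i i with hmmdef
    have hdiag_sum : ∀ b : Fin n → ℂ,
        diagonal b = ∑ j, b j • diagonal (Pi.single j (1:ℂ)) := by
      intro b
      ext i i'
      rw [Matrix.sum_apply]
      simp only [Matrix.smul_apply, diagonal_apply, Pi.single_apply, smul_eq_mul]
      by_cases hii : i = i'
      · subst hii
        simp [Finset.sum_ite_eq]
      · simp [hii]
    have hψentry : ∀ (b : Fin n → ℂ) (i : Fin n),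
        ψ (diagonal b) i i = ∑ j, mm i j * b j := by
      intro b i
      rw [hdiag_sum b]
      have hψsum : ψ (∑ j, b j • diagonal (Pi.single j (1:ℂ)))
          = ∑ j, b j • ψ (diagonal (Pi.single j 1)) := by
        have h1 : ψ (∑ j, b j • diagonal (Pi.single j (1:ℂ)))
            = (hψlin.mk' ψ) (∑ j, b j • diagonal (Pi.single j (1:ℂ))) := rfl
        rw [h1, map_sum]
        simp [IsLinearMap.mk'_apply]
      rw [hψsum, Matrix.sum_apply]
      apply Finset.sum_congr rfl
      intro j _
      rw [Matrix.smul_apply, smul_eq_mul, mul_comm]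
    have hψd : ∀ b : Fin n → ℂ,
        ψ (diagonal b) = diagonal (fun i => ∑ j, mm i j * b j) := by
      intro b
      have hd := hψdiag (diagonal b) (isDiag_diagonal b)
      rw [← IsDiag.diagonal_diag hd]
      exact congrArg diagonal (funext fun i => hψentry b i)
    -- ball setup
    have hcont : Continuous (fun b : Fin n → ℂ => diagonal b) := by
      apply continuous_matrix
      intro i j
      by_cases hij : i = j
      · subst hij; simpa [diagonal_apply_eq] using continuous_apply i
      · simpa [diagonal_apply_ne _ hij] using continuous_const
    have hV : IsOpen ((fun b : Fin n → ℂ => diagonal b) ⁻¹' U) := hUopen.preimage hcont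
    have h1U : (1 : Matrix (Fin n) (Fin n) ℂ) ∈ U := by
      rw [hSU] at hS1; exact hS1.1
    have h1V : (fun _ => (1:ℂ)) ∈ ((fun b : Fin n → ℂ => diagonal b) ⁻¹' U) := by
      simpa [diagonal_one] using h1U
    obtain ⟨ε0, hε0, hball0⟩ := Metric.isOpen_iff.mp hV _ h1V
    set ε : ℝ := min ε0 1 with hεdef
    have hε : 0 < ε := lt_min hε0 one_pos
    have hε1 : ε ≤ 1 := min_le_right _ _
    have hmem : ∀ b : Fin n → ℂ, (∀ i, b i ∈ Metric.ball (1:ℂ) ε) → diagonal b ∈ S := by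
      intro b hb
      have hdist : dist b (fun _ => (1:ℂ)) < ε0 := by
        rw [dist_pi_lt_iff hε0]
        intro i
        exact lt_of_lt_of_le (hb i) (min_le_left _ _)
      have hmemU := hball0 (Metric.mem_ball.mpr hdist)
      rw [hSU]
      exact ⟨hmemU, isDiag_diagonal b⟩
    have hzne : ∀ z : ℂ, z ∈ Metric.ball (1:ℂ) ε → z ≠ 0 := by
      intro z hz h0
      rw [h0, Metric.mem_ball, dist_eq_norm] at hz
      simp only [zero_sub, norm_neg, norm_one] at hz
      linarith
    have hbne : ∀ (b : Fin n → ℂ), (∀ i, b i ∈ Metric.ball (1:ℂ) ε) → ∀ i, b i ≠ 0 :=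
      fun b hb i => hzne _ (hb i)
    have hone_mem : (1:ℂ) ∈ Metric.ball (1:ℂ) ε := by simp [hε]
    -- nonvanishing for negative k
    have hLne : k < 0 → ∀ b : Fin n → ℂ, (∀ i, b i ∈ Metric.ball (1:ℂ) ε) →
        ∀ i, (∑ j, mm i j * b j) ≠ 0 := by
      intro hk b hb i0 hL0
      have hBS := hmem b hb
      have ht := h (diagonal (fun j => b j ^ (-k))) (isDiag_diagonal _) (diagonal b) hBS
      rw [hψd b] at ht
      have hkz : (diagonal (fun i => ∑ j, mm i j * b j)) ^ k = 0 := by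
        obtain ⟨m, hm⟩ : ∃ m : ℕ, k = -(m:ℤ) := ⟨(-k).toNat, by omega⟩
        rw [hm, Matrix.zpow_neg_natCast]
        apply Matrix.nonsing_inv_apply_not_isUnit
        rw [det_pow, det_diagonal]
        intro hu
        have hm0 : m ≠ 0 := by omega
        have := (isUnit_pow_iff hm0).mp hu
        rw [isUnit_iff_ne_zero] at this
        exact this (Finset.prod_eq_zero (Finset.mem_univ i0) hL0)
      rw [hkz, mul_zero, trace_zero] at ht
      rw [diag_zpow b (hbne b hb) k, diagonal_mul_diagonal, trace_diagonal] at ht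
      have hsum : ∑ i, b i ^ (-k) * b i ^ k = (n : ℂ) := by
        rw [Finset.sum_congr rfl (fun i _ => by
          rw [← zpow_add₀ (hbne b hb i), neg_add_cancel, zpow_zero])]
        simp
      rw [hsum] at ht
      exact (Nat.cast_ne_zero.mpr hn.ne').symm ht
    -- scalar trace identity
    have key : ∀ a b : Fin n → ℂ, (∀ i, b i ∈ Metric.ball (1:ℂ) ε) →
        ∑ i, (φ (diagonal a) i i) * (∑ j, mm i j * b j) ^ k = ∑ j, a j * b j ^ k := by
      intro a b hb
      have hBS := hmem b hb
      have ht := h (diagonal a) (isDiag_diagonal a) (diagonal b) hBS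
      rw [hφd a, hψd b, diag_zpow b (hbne b hb) k] at ht
      have hpow : (diagonal (fun i => ∑ j, mm i j * b j)) ^ k
          = diagonal (fun i => (∑ j, mm i j * b j) ^ k) := by
        rcases le_or_gt 0 k with hk | hk
        · obtain ⟨m, rfl⟩ : ∃ m : ℕ, k = (m:ℤ) := ⟨k.toNat, by omega⟩
          exact diag_zpow_nat _ m
        · exact diag_zpow _ (hLne hk b hb) k
      rw [hpow, diagonal_mul_diagonal, diagonal_mul_diagonal, trace_diagonal,
        trace_diagonal] at ht
      exact ht
    have hind : ∀ x : Fin n → ℂ,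
        (∀ b : Fin n → ℂ, (∀ i, b i ∈ Metric.ball (1:ℂ) ε) → ∑ j, x j * b j ^ k = 0) →
        x = 0 := fun x hx => indep_zpow hk0 hε x hx
    -- the matrix G
    set G : Matrix (Fin n) (Fin n) ℂ :=
      Matrix.of (fun j i => φ (diagonal (Pi.single j 1)) i i) with hGdef
    have hG : ∀ b : Fin n → ℂ, (∀ i, b i ∈ Metric.ball (1:ℂ) ε) →
        ∀ j, ∑ i, G j i * (∑ j', mm i j' * b j') ^ k = b j ^ k := by
      intro b hb j
      have h1 := key (Pi.single j 1) b hb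
      have h2 : ∑ p, (Pi.single j 1 : Fin n → ℂ) p * b p ^ k = b j ^ k := by
        simp [Pi.single_apply, ite_mul, Finset.sum_ite_eq]
      rw [h2] at h1
      exact h1
    have hGdet : G.det ≠ 0 := by
      intro hdet
      obtain ⟨x, hx0, hxG⟩ := Matrix.exists_vecMul_eq_zero_iff.mpr hdet
      apply hx0
      apply hind x
      intro b hb
      calc ∑ j, x j * b j ^ k
          = ∑ j, x j * ∑ i, G j i * (∑ j', mm i j' * b j') ^ k := by
            exact Finset.sum_congr rfl (fun j _ => by rw [hG b hb j])
        _ = ∑ i, (∑ j, x j * G j i) * (∑ j', mm i j' * b j') ^ k := by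
            simp_rw [Finset.mul_sum, Finset.sum_mul]
            rw [Finset.sum_comm]
            simp_rw [mul_assoc]
        _ = 0 := by
            have hz : ∀ i, (∑ j, x j * G j i) = 0 := by
              intro i
              have := congrFun hxG i
              simpa [Matrix.vecMul, dotProduct] using this
            simp [hz]
    have hGunit : IsUnit G.det := isUnit_iff_ne_zero.mpr hGdet
    have hDG : G⁻¹ * G = 1 := nonsing_inv_mul G hGunit
    have hD : ∀ b : Fin n → ℂ, (∀ i, b i ∈ Metric.ball (1:ℂ) ε) →
        ∀ i, (∑ j, mm i j * b j) ^ k = ∑ j, G⁻¹ i j * b j ^ k := by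
      intro b hb i
      have hmv : G.mulVec (fun i => (∑ j, mm i j * b j) ^ k) = fun j => b j ^ k := by
        funext j
        simp only [Matrix.mulVec, dotProduct]
        exact hG b hb j
      have hv : (fun i => (∑ j, mm i j * b j) ^ k)
          = G⁻¹.mulVec (fun j => b j ^ k) := by
        rw [← hmv, Matrix.mulVec_mulVec, hDG, Matrix.one_mulVec]
      have := congrFun hv i
      rw [this]
      simp [Matrix.mulVec, dotProduct]
    -- purity of rows
    have hpure : ∀ i j l, j ≠ l → mm i j ≠ 0 → mm i l = 0 := by
      intro i j l hjl hmj
      by_contra hml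
      set μ := mm i j with hμdef
      set ν := mm i l with hνdef
      set α : ℂ := ∑ p ∈ (Finset.univ.erase j).erase l, mm i p with hαdef
      set d1 := G⁻¹ i j with hd1def
      set d2 := G⁻¹ i l with hd2def
      set c0 : ℂ := ∑ p ∈ (Finset.univ.erase j).erase l, G⁻¹ i p with hc0def
      set bfun : ℂ → ℂ → Fin n → ℂ :=
        fun s t p => if p = j then s else if p = l then t else 1 with hbfundef
      have hbmem : ∀ {s t : ℂ}, s ∈ Metric.ball (1:ℂ) ε → t ∈ Metric.ball (1:ℂ) ε →
          ∀ p, bfun s t p ∈ Metric.ball (1:ℂ) ε := by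
        intro s t hs ht p
        simp only [hbfundef]
        split_ifs
        · exact hs
        · exact ht
        · exact hone_mem
      have hbj : ∀ s t : ℂ, bfun s t j = s := by intro s t; simp [hbfundef]
      have hbl : ∀ s t : ℂ, bfun s t l = t := by intro s t; simp [hbfundef, Ne.symm hjl]
      have hbo : ∀ (s t : ℂ) p, p ≠ j → p ≠ l → bfun s t p = 1 := by
        intro s t p hp1 hp2; simp [hbfundef, hp1, hp2]
      have hLb : ∀ s t : ℂ, (∑ p, mm i p * bfun s t p) = μ * s + ν * t + α := by
        intro s t
        rw [sum_split hjl (fun p => mm i p * bfun s t p), hbj, hbl]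
        congr 1
        apply Finset.sum_congr rfl
        intro p hp
        have hp2 : p ≠ l := (Finset.mem_erase.mp hp).1
        have hp1 : p ≠ j := (Finset.mem_erase.mp (Finset.mem_erase.mp hp).2).1
        rw [hbo s t p hp1 hp2, mul_one]
      have hid : ∀ s t : ℂ, s ∈ Metric.ball (1:ℂ) ε → t ∈ Metric.ball (1:ℂ) ε →
          (μ * s + ν * t + α) ^ k = d1 * s ^ k + d2 * t ^ k + c0 := by
        intro s t hs ht
        have h1 := hD (bfun s t) (hbmem hs ht) i
        rw [hLb s t] at h1
        rw [h1, sum_split hjl (fun p => G⁻¹ i p * bfun s t p ^ k), hbj, hbl]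
        congr 1
        apply Finset.sum_congr rfl
        intro p hp
        have hp2 : p ≠ l := (Finset.mem_erase.mp hp).1
        have hp1 : p ≠ j := (Finset.mem_erase.mp (Finset.mem_erase.mp hp).2).1
        rw [hbo s t p hp1 hp2, _root_.one_zpow, mul_one]
      have hβ : ∀ t ∈ Metric.ball (1:ℂ) ε, ν * t + α = 0 := by
        intro t ht
        rcases lt_or_ge k 0 with hkneg | hkpos
        · obtain ⟨m, hm⟩ : ∃ m : ℕ, k = -(m:ℤ) := ⟨(-k).toNat, by omega⟩
          have hm0 : m ≠ 0 := by omega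
          have ht0 : t ≠ 0 := hzne t ht
          have hq0 : (C (t^m) * X^m -
              (C d1 * C (t^m) + C d2 * X^m + C c0 * (X^m * C (t^m)))
                * (C μ * X + C (ν*t+α))^m : Polynomial ℂ) = 0 := by
            apply poly_vanish hε
            intro s hs
            have hs0 : s ≠ 0 := hzne s hs
            have hx : μ * s + ν * t + α ≠ 0 := by
              have h2 := hLne hkneg (bfun s t) (hbmem hs ht) i
              rwa [hLb s t] at h2
            have hid' := hid s t hs ht
            rw [hm, _root_.zpow_neg, _root_.zpow_neg, _root_.zpow_neg,
              zpow_natCast, zpow_natCast, zpow_natCast] at hid'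
            simp only [eval_sub, eval_mul, eval_add, eval_pow, eval_C, eval_X]
            have hxm : (μ * s + ν * t + α)^m ≠ 0 := pow_ne_zero _ hx
            have hsm : s^m ≠ 0 := pow_ne_zero _ hs0
            have htm : t^m ≠ 0 := pow_ne_zero _ ht0
            field_simp at hid'
            linear_combination hid'
          have hev := congrArg (Polynomial.eval (-(ν*t+α)/μ)) hq0
          simp only [eval_sub, eval_mul, eval_add, eval_pow, eval_C, eval_X, eval_zero] at hev
          have hzero : μ * (-(ν*t+α)/μ) + (ν*t+α) = 0 := by field_simp; ring
          rw [hzero, zero_pow hm0, mul_zero, sub_zero] at hev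
          have hs0m : (-(ν*t+α)/μ)^m = 0 := by
            rcases mul_eq_zero.mp hev with h' | h'
            · exact absurd h' (pow_ne_zero _ ht0)
            · exact h'
          have := pow_eq_zero_iff hm0 |>.mp hs0m
          rw [_root_.div_eq_zero_iff] at this
          rcases this with h' | h'
          · linear_combination -h'
          · exact absurd h' hmj
        · have hk2 : (2:ℤ) ≤ k := by omega
          obtain ⟨m, hm⟩ : ∃ m : ℕ, k = (m:ℤ) := ⟨k.toNat, by omega⟩
          have hm2 : 2 ≤ m := by omega
          set γ := (ν*t+α)/μ with hγdef
          have hμγ : μ * γ = ν*t+α := by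
            rw [hγdef]; field_simp
          have hCs : (C μ * X + C (ν*t+α) : Polynomial ℂ) = C μ * (X + C γ) := by
            rw [mul_add, ← C_mul, hμγ]
          have hq0 : ((C μ * X + C (ν*t+α))^m
              - (C d1 * X^m + C (d2 * t^m + c0)) : Polynomial ℂ) = 0 := by
            apply poly_vanish hε
            intro s hs
            have hid' := hid s t hs ht
            rw [hm, zpow_natCast, zpow_natCast, zpow_natCast] at hid'
            simp only [eval_sub, eval_pow, eval_add, eval_mul, eval_C, eval_X]
            linear_combination hid'
          have hc := congrArg (fun p : Polynomial ℂ => p.coeff (m-1)) hq0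
          simp only [coeff_sub, coeff_add, coeff_zero] at hc
          rw [hCs, mul_pow, ← C_pow, coeff_C_mul, coeff_X_add_C_pow,
            coeff_C_mul, coeff_X_pow, coeff_C] at hc
          have he1 : m - (m-1) = 1 := by omega
          have he2 : ¬ (m - 1 = m) := by omega
          have he3 : ¬ (m - 1 = 0) := by omega
          rw [he1, pow_one, if_neg he2, if_neg he3] at hc
          have hch : m.choose (m-1) = m := by
            rw [Nat.choose_symm (show 1 ≤ m by omega), Nat.choose_one_right]
          rw [hch] at hc
          have hγ0 : γ = 0 := by
            have hμm : μ^m ≠ 0 := pow_ne_zero _ hmj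
            have hmc : (m:ℂ) ≠ 0 := Nat.cast_ne_zero.mpr (by omega)
            have hc' : μ ^ m * (γ * m) = 0 := by linear_combination hc
            rcases mul_eq_zero.mp hc' with h' | h'
            · exact absurd h' hμm
            · rcases mul_eq_zero.mp h' with h'' | h''
              · exact h''
              · exact absurd h'' hmc
          rw [hγdef, _root_.div_eq_zero_iff] at hγ0
          rcases hγ0 with h' | h'
          · exact h'
          · exact absurd h' hmj
      have hb1 := hβ 1 hone_mem
      have hb2 := hβ _ (mem_ball_one_add hε)
      have hne1 : ((1 + ε/2 : ℝ) : ℂ) ≠ 1 := by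
        intro hc
        have h1' : (1 + ε/2 : ℝ) = 1 := by exact_mod_cast hc
        linarith
      have hfin : ν * (((1 + ε/2 : ℝ):ℂ) - 1) = 0 := by linear_combination hb2 - hb1
      rcases mul_eq_zero.mp hfin with h' | h'
      · exact hml h'
      · exact hne1 (by linear_combination h')
    -- rows nonzero
    have hrow : ∀ i, ∃ j, mm i j ≠ 0 := by
      intro i
      by_contra hc
      push_neg at hc
      have hz : ∀ b : Fin n → ℂ, (∀ i', b i' ∈ Metric.ball (1:ℂ) ε) →
          ∑ j, G⁻¹ i j * b j ^ k = 0 := by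
        intro b hb
        have h1 := hD b hb i
        rw [show (∑ j, mm i j * b j) = 0 by simp [hc]] at h1
        rw [← h1]
        exact zero_zpow k hk0
      have hzero := hind (fun j => G⁻¹ i j) hz
      have h11 := congrFun (congrFun hDG i) i
      rw [Matrix.mul_apply] at h11
      have : ∀ j, G⁻¹ i j = 0 := fun j => congrFun hzero j
      rw [Finset.sum_congr rfl (fun j _ => by rw [this j, zero_mul])] at h11
      simp at h11
    choose τ0 hτ0 using hrow
    have hoff : ∀ i j, j ≠ τ0 i → mm i j = 0 :=
      fun i j hj => hpure i (τ0 i) j (Ne.symm hj) (hτ0 i)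
    have hLp : ∀ (b : Fin n → ℂ) i, (∑ j, mm i j * b j) = mm i (τ0 i) * b (τ0 i) := by
      intro b i
      rw [Finset.sum_eq_single (τ0 i)]
      · intro j _ hj
        rw [hoff i j hj, zero_mul]
      · intro hmem'; exact absurd (Finset.mem_univ _) hmem'
    have hDrow : ∀ i j, G⁻¹ i j = if j = τ0 i then (mm i (τ0 i)) ^ k else 0 := by
      intro i j
      have hx := hind (fun j' => G⁻¹ i j' - (if j' = τ0 i then (mm i (τ0 i)) ^ k else 0)) ?_
      · have := congrFun hx j
        simpa [sub_eq_zero] using this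
      · intro b hb
        have h1 := hD b hb i
        rw [hLp b i, mul_zpow] at h1
        simp_rw [sub_mul, Finset.sum_sub_distrib]
        rw [← h1]
        simp_rw [ite_mul, zero_mul]
        rw [Finset.sum_ite_eq' Finset.univ (τ0 i)]
        simp
    -- injectivity
    have hinj : Function.Injective τ0 := by
      intro i1 i2 h12
      by_contra hne
      have hc1 : (mm i1 (τ0 i1)) ^ k ≠ 0 := zpow_ne_zero _ (hτ0 i1)
      have hc2 : (mm i2 (τ0 i2)) ^ k ≠ 0 := zpow_ne_zero _ (hτ0 i2)
      set x : Fin n → ℂ := fun i =>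
        if i = i1 then (mm i2 (τ0 i2)) ^ k else if i = i2 then -((mm i1 (τ0 i1)) ^ k) else 0
        with hxdef
      have hxG : x ᵥ* G⁻¹ = 0 := by
        funext j
        show ∑ i, x i * G⁻¹ i j = 0
        rw [sum_split hne (fun i => x i * G⁻¹ i j)]
        have hx1 : x i1 = (mm i2 (τ0 i2)) ^ k := by simp [hxdef]
        have hx2 : x i2 = -((mm i1 (τ0 i1)) ^ k) := by simp [hxdef, Ne.symm hne]
        have hrest : ∑ p ∈ (Finset.univ.erase i1).erase i2, x p * G⁻¹ p j = 0 := by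
          apply Finset.sum_eq_zero
          intro p hp
          have hp2 : p ≠ i2 := (Finset.mem_erase.mp hp).1
          have hp1 : p ≠ i1 := (Finset.mem_erase.mp (Finset.mem_erase.mp hp).2).1
          rw [show x p = 0 by simp [hxdef, hp1, hp2], zero_mul]
        rw [hrest, hx1, hx2, hDrow i1 j, hDrow i2 j, h12]
        split_ifs <;> ring
      have hx0 : x = 0 := by
        have h2 := congrArg (fun y => y ᵥ* G) hxG
        simpa [Matrix.vecMul_vecMul, hDG, Matrix.vecMul_one, Matrix.zero_vecMul] using h2
      have := congrFun hx0 i1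
      simp [hxdef] at this
      exact hc2 this
    have hbij : Function.Bijective τ0 := (Finite.injective_iff_bijective).mp hinj
    set σ : Equiv.Perm (Fin n) := Equiv.ofBijective τ0 hbij with hσdef
    have hσ : ∀ i, σ i = τ0 i := fun i => rfl
    set cvec : Fin n → ℂ := fun j => mm (σ.symm j) (τ0 (σ.symm j)) with hcvecdef
    have hcne : ∀ j, cvec j ≠ 0 := fun j => hτ0 _
    have hcσ : ∀ i, cvec (σ i) = mm i (τ0 i) := by
      intro i
      simp only [hcvecdef]
      rw [Equiv.symm_apply_apply]
    have hdet_cvec : IsUnit (diagonal cvec) := by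
      rw [Matrix.isUnit_iff_isUnit_det, det_diagonal, isUnit_iff_ne_zero]
      exact Finset.prod_ne_zero_iff.mpr fun j _ => hcne j
    refine ⟨diagonal cvec, σ.permMatrix ℂ, σ, isDiag_diagonal cvec, hdet_cvec, rfl, ?_, ?_⟩
    · -- φ formula
      intro A hA
      have hFa : (fun i => φ (diagonal A.diag) i i)
          = fun i => (cvec (σ i)) ^ (-k) * A.diag (σ i) := by
        set a := A.diag with hadef
        have hx := hind (fun j => φ (diagonal a) (σ.symm j) (σ.symm j) * (cvec j) ^ k - a j) ?_
        · funext i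
          have := congrFun hx (σ i)
          simp only [Pi.zero_apply, sub_eq_zero, Equiv.symm_apply_apply] at this
          rw [_root_.zpow_neg, eq_inv_mul_iff_mul_eq₀ (zpow_ne_zero _ (hcne (σ i))),
            mul_comm]
          exact this
        · intro b hb
          have h1 := key a b hb
          have h2 : ∑ i, (φ (diagonal a) i i) * (∑ j, mm i j * b j) ^ k
              = ∑ j, (φ (diagonal a) (σ.symm j) (σ.symm j) * (cvec j) ^ k) * b j ^ k := by
            rw [← Equiv.sum_comp σ
              (fun j => (φ (diagonal a) (σ.symm j) (σ.symm j) * (cvec j) ^ k) * b j ^ k)]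
            apply Finset.sum_congr rfl
            intro i _
            rw [Equiv.symm_apply_apply, hLp b i, mul_zpow, hcσ i, hσ i]
            ring
          simp_rw [sub_mul, Finset.sum_sub_distrib]
          rw [← h2, h1, sub_self]
      rw [← IsDiag.diagonal_diag hA, hφd A.diag, hFa,
        diag_zpow cvec hcne (-k), mul_assoc _ _ (diagonal A.diag), diagonal_mul_diagonal,
        perm_conj σ]
    · -- ψ formula
      intro B hB
      rw [← IsDiag.diagonal_diag hB, hψd B.diag,
        mul_assoc _ _ (diagonal B.diag), diagonal_mul_diagonal, perm_conj σ]
      exact congrArg diagonal (funext fun i => by rw [hLp, hcσ i, hσ i])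
  · -- reverse direction
    rintro ⟨C, P, σ, hCdiag, hCunit, hP, hφ, hψ⟩ A hA B hBS
    have hBdiag : B.IsDiag := by rw [hSU] at hBS; exact hBS.2
    have hBunit := hSinv B hBS
    have hb0 : ∀ i, B.diag i ≠ 0 := by
      have hdet : B.det ≠ 0 := by
        rw [← isUnit_iff_ne_zero]
        exact (Matrix.isUnit_iff_isUnit_det B).mp hBunit
      rw [← IsDiag.diagonal_diag hBdiag, det_diagonal] at hdet
      intro i h0
      exact hdet (Finset.prod_eq_zero (Finset.mem_univ i) h0)
    have hc0 : ∀ i, C.diag i ≠ 0 := by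
      have hdet : C.det ≠ 0 := by
        rw [← isUnit_iff_ne_zero]
        exact (Matrix.isUnit_iff_isUnit_det C).mp hCunit
      rw [← IsDiag.diagonal_diag hCdiag, det_diagonal] at hdet
      intro i h0
      exact hdet (Finset.prod_eq_zero (Finset.mem_univ i) h0)
    subst hP
    rw [hφ A hA, hψ B hBdiag]
    set a := A.diag with hadef
    set b := B.diag with hbdef
    set c := C.diag with hcdef
    rw [← IsDiag.diagonal_diag hBdiag, ← IsDiag.diagonal_diag hA, ← IsDiag.diagonal_diag hCdiag]
    rw [mul_assoc _ (diagonal c) (diagonal b), diagonal_mul_diagonal, perm_conj σ]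
    rw [diag_zpow c hc0 (-k), mul_assoc _ _ (diagonal a), diagonal_mul_diagonal, perm_conj σ]
    rw [diag_zpow _ (fun i => mul_ne_zero (hc0 (σ i)) (hb0 (σ i))) k,
      diag_zpow b hb0 k]
    rw [diagonal_mul_diagonal, diagonal_mul_diagonal, trace_diagonal, trace_diagonal]
    rw [← Equiv.sum_comp σ (fun j => a j * b j ^ k)]
    apply Finset.sum_congr rfl
    intro i _
    rw [mul_zpow, _root_.zpow_neg]
    have hck : (c (σ i)) ^ k ≠ 0 := zpow_ne_zero _ (hc0 (σ i))
    field_simp
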